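/- Let R be a coherent commutative ring, 𝔗 a torsion theory over R, 𝔞 a finitely generated ideal of R, and M an R-module with M ∈ 𝔗. Then the local cohomology modules H^i_𝔞(M) := colim_{n∈ℕ} Ext^i_R(R/𝔞ⁿ, M) belong to 𝔗 for all i ≥ 0. -/

import Mathlib

open CategoryTheory

universe u

noncomputable section

set_option synthInstance.maxHeartbeats 1000000
set_option maxHeartbeats 1000000

/-- A torsion theory over `R`: a class of `R`-modules closed under isomorphism, submodules,
quotient modules, extensions, and directed colimits (formulated as closure under directed
unions of submodules). -/
structure IsTorsionTheory (R : Type u) [CommRing R] (T : Set (ModuleCat.{u} R)) : Prop where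
  mem_of_iso : ∀ {N N' : ModuleCat.{u} R}, (N ≅ N') → N ∈ T → N' ∈ T
  submodule_mem : ∀ {N : ModuleCat.{u} R}, N ∈ T → ∀ S : Submodule R N,
    ModuleCat.of R S ∈ T
  quotient_mem : ∀ {N : ModuleCat.{u} R}, N ∈ T → ∀ S : Submodule R N,
    ModuleCat.of R (N ⧸ S) ∈ T
  ext_mem : ∀ {N : ModuleCat.{u} R} (S : Submodule R N),
    ModuleCat.of R S ∈ T → ModuleCat.of R (N ⧸ S) ∈ T → N ∈ T
  directed_mem : ∀ {N : ModuleCat.{u} R} {ι : Type u} [Nonempty ι] (S : ι → Submodule R N),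
    Directed (· ≤ ·) S → (∀ i, ModuleCat.of R (S i) ∈ T) → iSup S = ⊤ → N ∈ T

variable {R : Type u} [CommRing R]

/-- A commutative ring is coherent if every finitely generated ideal is finitely presented. -/
def IsCoherentRing (R : Type u) [CommRing R] : Prop :=
  ∀ I : Ideal R, I.FG → Module.FinitePresentation R I

section TTHelpers

variable {T : Set (ModuleCat.{u} R)}

lemma TT.mem_congr (hT : IsTorsionTheory R T) {A B : Type u} [AddCommGroup A] [Module R A]
    [AddCommGroup B] [Module R B]
    (e : A ≃ₗ[R] B) (hA : ModuleCat.of R A ∈ T) : ModuleCat.of R B ∈ T :=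
  hT.mem_of_iso e.toModuleIso hA

lemma TT.subsingleton_mem (hT : IsTorsionTheory R T) {M : Type u} [AddCommGroup M] [Module R M]
    (hM : ModuleCat.of R M ∈ T) (Z : Type u) [AddCommGroup Z] [Module R Z] [Subsingleton Z] :
    ModuleCat.of R Z ∈ T := by
  refine TT.mem_congr hT ?_ (hT.submodule_mem hM ⊥)
  exact { toFun := fun _ => 0, invFun := fun _ => 0,
          map_add' := fun _ _ => (Subsingleton.elim _ _),
          map_smul' := fun _ _ => (Subsingleton.elim _ _),
          left_inv := fun _ => Subsingleton.elim _ _,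
          right_inv := fun _ => Subsingleton.elim _ _ }

lemma TT.prod_mem (hT : IsTorsionTheory R T) {A B : Type u} [AddCommGroup A] [Module R A]
    [AddCommGroup B] [Module R B]
    (hA : ModuleCat.of R A ∈ T) (hB : ModuleCat.of R B ∈ T) :
    ModuleCat.of R (A × B) ∈ T := by
  have hcompl : IsCompl (Submodule.fst R A B) (Submodule.snd R A B) :=
    IsCompl.of_eq (Submodule.fst_inf_snd R A B) (Submodule.fst_sup_snd R A B)
  refine hT.ext_mem (N := ModuleCat.of R (A × B)) (Submodule.fst R A B) ?_ ?_
  · exact TT.mem_congr hT (Submodule.fstEquiv R A B).symm hA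
  · exact TT.mem_congr hT
      ((Submodule.sndEquiv R A B).symm.trans
        (Submodule.quotientEquivOfIsCompl _ _ hcompl).symm) hB

def piFinSuccLEquiv (M : Type u) [AddCommGroup M] [Module R M] (k : ℕ) :
    (Fin (k + 1) → M) ≃ₗ[R] M × (Fin k → M) :=
  { (Fin.consEquiv fun _ => M).symm with
    map_add' := fun _ _ => rfl
    map_smul' := fun _ _ => rfl }

lemma TT.pi_mem (hT : IsTorsionTheory R T) {M : Type u} [AddCommGroup M] [Module R M]
    (hM : ModuleCat.of R M ∈ T) (k : ℕ) : ModuleCat.of R (Fin k → M) ∈ T := by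
  induction k with
  | zero =>
    haveI : Subsingleton (Fin 0 → M) := ⟨fun a b => funext (fun i => i.elim0)⟩
    exact TT.subsingleton_mem hT hM _
  | succ k ih =>
    exact TT.mem_congr hT (piFinSuccLEquiv M k).symm (TT.prod_mem hT hM ih)

lemma TT.linearMap_mem (hT : IsTorsionTheory R T) {M : Type u} [AddCommGroup M] [Module R M]
    (hM : ModuleCat.of R M ∈ T) (k : ℕ) :
    ModuleCat.of R ((Fin k → R) →ₗ[R] M) ∈ T := by
  refine TT.mem_congr hT ?_ (TT.pi_mem hT hM k)
  exact (LinearEquiv.piCongrRight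
      (fun _ : Fin k => (LinearMap.ringLmapEquivSelf R R M).symm)).trans
    (LinearMap.lsum R (fun _ : Fin k => R) R)

lemma TT.range_mem (hT : IsTorsionTheory R T) {A : Type u} [AddCommGroup A] [Module R A]
    {B : Type u} [AddCommGroup B] [Module R B]
    (hA : ModuleCat.of R A ∈ T) (f : A →ₗ[R] B) :
    ModuleCat.of R (LinearMap.range f) ∈ T :=
  TT.mem_congr hT (f.quotKerEquivRange) (hT.quotient_mem hA (LinearMap.ker f))

end TTHelpers

open Function


theorem fp_of_fg_submodule (hR : IsCoherentRing R) :
    ∀ (k : ℕ) (S : Submodule R (Fin k → R)), S.FG → Module.FinitePresentation R S := by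
  intro k
  induction k with
  | zero =>
    intro S _
    haveI : Subsingleton S := by
      refine ⟨fun a b => Subtype.ext (Subsingleton.elim _ _)⟩
    refine Module.finitePresentation_of_surjective (0 : R →ₗ[R] S)
      (fun x => ⟨0, Subsingleton.elim _ _⟩) ?_
    rw [LinearMap.ker_zero]
    exact Module.Finite.fg_top
  | succ k ih =>
    intro S hS
    haveI : Module.Finite R S := Module.Finite.iff_fg.mpr hS
    let f : S →ₗ[R] R := (LinearMap.proj (Fin.last k)).comp S.subtype
    have hIfg : (LinearMap.range f).FG := Module.Finite.iff_fg.mp inferInstance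
    letI hI : Module.FinitePresentation R (LinearMap.range f) := hR _ hIfg
    have hsurj : Surjective f.rangeRestrict := f.surjective_rangeRestrict
    have hker_fg : (LinearMap.ker f.rangeRestrict).FG :=
      Module.FinitePresentation.fg_ker _ hsurj
    let h : S →ₗ[R] (Fin k → R) := (LinearMap.funLeft R R Fin.castSucc).comp S.subtype
    let g : (LinearMap.ker f.rangeRestrict) →ₗ[R] (Fin k → R) :=
      h.comp (LinearMap.ker f.rangeRestrict).subtype
    have hker0 : LinearMap.ker g = ⊥ := by
      rw [eq_bot_iff]
      rintro x hx
      rw [Submodule.mem_bot]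
      apply Subtype.ext
      apply Subtype.ext
      funext i
      induction i using Fin.lastCases with
      | last =>
        show ((x : S) : Fin (k+1) → R) (Fin.last k) = 0
        have h2 : f.rangeRestrict (x : S) = 0 := x.2
        exact Subtype.ext_iff.mp h2
      | cast i =>
        show ((x : S) : Fin (k+1) → R) (Fin.castSucc i) = 0
        exact congrFun (LinearMap.mem_ker.mp hx) i
    have hginj : Injective g := by
      intro x y hxy
      apply Subtype.ext
      apply Subtype.ext
      funext i
      induction i using Fin.lastCases with
      | last =>
        have hx2 : f.rangeRestrict (x : S) = 0 := x.2
        have hy2 : f.rangeRestrict (y : S) = 0 := y.2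
        exact (Subtype.ext_iff.mp hx2).trans (Subtype.ext_iff.mp hy2).symm
      | cast i =>
        exact congrFun hxy i
    have hrg : (LinearMap.range g).FG := by
      have e : LinearMap.range g = Submodule.map h (LinearMap.ker f.rangeRestrict) := by
        rw [LinearMap.range_comp, Submodule.range_subtype]
      rw [e]
      exact hker_fg.map h
    letI hKfp : Module.FinitePresentation R (LinearMap.ker f.rangeRestrict) := by
      letI := ih _ hrg
      have e := LinearEquiv.ofInjective g hginj
      exact Module.FinitePresentation.of_equiv (R := R) (M := ↥(LinearMap.range g))
        (N := ↥(LinearMap.ker f.rangeRestrict)) e.symm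
    exact Module.finitePresentation_of_ker f.rangeRestrict hsurj

lemma quot_fp {a : Ideal R} (ha : a.FG) (n : ℕ) :
    Module.FinitePresentation R (R ⧸ (a ^ n)) :=
  Module.finitePresentation_of_surjective (a ^ n).mkQ (Submodule.mkQ_surjective _)
    (by rw [Submodule.ker_mkQ]; exact Submodule.FG.pow ha n)

open CategoryTheory CategoryTheory.Limits

section Resolution

variable (hR : IsCoherentRing R)

structure FCover (N : ModuleCat.{u} R) : Type u where
  k : ℕ
  p : (Fin k → R) →ₗ[R] N
  surj : Function.Surjective p
  fpker : Module.FinitePresentation R (LinearMap.ker p)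

noncomputable def mkFCover (N : ModuleCat.{u} R) (hN : Module.FinitePresentation R N) :
    FCover N := by
  letI := hN
  let e := Module.Finite.exists_fin' R N
  refine ⟨e.choose, e.choose_spec.choose, e.choose_spec.choose_spec, ?_⟩
  exact fp_of_fg_submodule hR _ _ (Module.FinitePresentation.fg_ker _ e.choose_spec.choose_spec)

variable (N₀ : ModuleCat.{u} R) (h₀ : Module.FinitePresentation R N₀)

noncomputable def tower : ℕ → Σ N : ModuleCat.{u} R, FCover N := fun n =>
  Nat.rec (⟨N₀, mkFCover hR N₀ h₀⟩ : Σ N : ModuleCat.{u} R, FCover N)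
    (fun _ prev => ⟨ModuleCat.of R (LinearMap.ker prev.2.p), mkFCover hR _ prev.2.fpker⟩) n

noncomputable def pmap (n : ℕ) : (Fin (tower hR N₀ h₀ n).2.k → R) →ₗ[R] (tower hR N₀ h₀ n).1 :=
  (tower hR N₀ h₀ n).2.p

lemma pmap_surj (n : ℕ) : Function.Surjective (pmap hR N₀ h₀ n) :=
  (tower hR N₀ h₀ n).2.surj

/-- The successor covering map, seen as landing in the kernel of the previous one. -/
noncomputable def pmap' (n : ℕ) :
    (Fin (tower hR N₀ h₀ (n + 1)).2.k → R) →ₗ[R] LinearMap.ker (pmap hR N₀ h₀ n) :=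
  (tower hR N₀ h₀ (n + 1)).2.p

lemma pmap'_surj (n : ℕ) : Function.Surjective (pmap' hR N₀ h₀ n) :=
  (tower hR N₀ h₀ (n + 1)).2.surj

noncomputable def freeX (n : ℕ) : ModuleCat.{u} R :=
  ModuleCat.of R (Fin (tower hR N₀ h₀ n).2.k → R)

noncomputable def dd (n : ℕ) : freeX hR N₀ h₀ (n + 1) ⟶ freeX hR N₀ h₀ n :=
  ModuleCat.ofHom ((LinearMap.ker (pmap hR N₀ h₀ n)).subtype.comp (pmap' hR N₀ h₀ n))

lemma pmap'_subtype (n : ℕ) (y : LinearMap.ker (pmap hR N₀ h₀ (n + 1))) :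
    pmap' hR N₀ h₀ n ((LinearMap.ker (pmap hR N₀ h₀ (n + 1))).subtype y) = 0 := y.2

lemma pmap_subtype (y : LinearMap.ker (pmap hR N₀ h₀ 0)) :
    pmap hR N₀ h₀ 0 ((LinearMap.ker (pmap hR N₀ h₀ 0)).subtype y) = 0 := y.2

lemma dd_sq (n : ℕ) : dd hR N₀ h₀ (n + 1) ≫ dd hR N₀ h₀ n = 0 := by
  apply ModuleCat.hom_ext
  apply LinearMap.ext
  intro x
  show (LinearMap.ker (pmap hR N₀ h₀ n)).subtype
      (pmap' hR N₀ h₀ n ((LinearMap.ker (pmap hR N₀ h₀ (n + 1))).subtype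
        (pmap' hR N₀ h₀ (n + 1) x))) = 0
  rw [pmap'_subtype, map_zero]

lemma exact_succ (n : ℕ) :
    (ShortComplex.mk (dd hR N₀ h₀ (n + 1)) (dd hR N₀ h₀ n) (dd_sq hR N₀ h₀ n)).Exact := by
  rw [ShortComplex.moduleCat_exact_iff]
  intro x hx
  have h0 : pmap' hR N₀ h₀ n x = 0 := by
    apply Submodule.injective_subtype (LinearMap.ker (pmap hR N₀ h₀ n))
    rw [map_zero]
    exact hx
  have hmem : x ∈ LinearMap.ker (pmap hR N₀ h₀ (n + 1)) := h0
  obtain ⟨y, hy⟩ := pmap'_surj hR N₀ h₀ (n + 1) ⟨x, hmem⟩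
  exact ⟨y, congrArg Subtype.val hy⟩

noncomputable def freeComplex : ChainComplex (ModuleCat.{u} R) ℕ :=
  ChainComplex.of (freeX hR N₀ h₀) (dd hR N₀ h₀) (dd_sq hR N₀ h₀)

lemma freeComplex_d (n : ℕ) :
    (freeComplex hR N₀ h₀).d (n + 1) n = dd hR N₀ h₀ n :=
  ChainComplex.of_d _ _ _

lemma d10_pmap : (freeComplex hR N₀ h₀).d 1 0 ≫
    (ModuleCat.ofHom (pmap hR N₀ h₀ 0) : freeX hR N₀ h₀ 0 ⟶ N₀) = 0 := by
  rw [freeComplex_d]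
  apply ModuleCat.hom_ext
  apply LinearMap.ext
  intro x
  show pmap hR N₀ h₀ 0 ((LinearMap.ker (pmap hR N₀ h₀ 0)).subtype (pmap' hR N₀ h₀ 0 x)) = 0
  rw [pmap_subtype]

lemma exact₀ :
    (ShortComplex.mk (dd hR N₀ h₀ 0) (ModuleCat.ofHom (pmap hR N₀ h₀ 0) : freeX hR N₀ h₀ 0 ⟶ N₀)
      (by rw [← freeComplex_d]; exact d10_pmap hR N₀ h₀)).Exact := by
  rw [ShortComplex.moduleCat_exact_iff]
  intro x hx
  obtain ⟨y, hy⟩ := pmap'_surj hR N₀ h₀ 0 ⟨x, hx⟩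
  exact ⟨y, congrArg Subtype.val hy⟩

noncomputable def freeRes : CategoryTheory.ProjectiveResolution N₀ where
  complex := freeComplex hR N₀ h₀
  projective n := ModuleCat.projective_of_free (Pi.basisFun R (Fin (tower hR N₀ h₀ n).2.k))
  π := (ChainComplex.toSingle₀Equiv _ _).symm
        ⟨(ModuleCat.ofHom (pmap hR N₀ h₀ 0) : freeX hR N₀ h₀ 0 ⟶ N₀), d10_pmap hR N₀ h₀⟩
  quasiIso := ⟨fun n => by
    cases n with
    | zero =>
      rw [ChainComplex.quasiIsoAt₀_iff, ShortComplex.quasiIso_iff_of_zeros']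
      rotate_left
      · rfl
      · rfl
      · rfl
      constructor
      · refine ShortComplex.exact_of_iso ?_ (exact₀ hR N₀ h₀)
        refine ShortComplex.isoMk (Iso.refl _) (Iso.refl _) (Iso.refl _) ?_ ?_
        · simp only [Iso.refl_hom, Category.id_comp, Category.comp_id]
          exact (freeComplex_d hR N₀ h₀ 0).symm
        · simp only [Iso.refl_hom, Category.id_comp, Category.comp_id]
          erw [Category.id_comp]
      · show Epi (((ChainComplex.toSingle₀Equiv _ _).symm ⟨_, d10_pmap hR N₀ h₀⟩).f 0)
        erw [ChainComplex.toSingle₀Equiv_symm_apply_f_zero]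
        exact (ModuleCat.epi_iff_surjective _).mpr (pmap_surj hR N₀ h₀ 0)
    | succ n =>
      rw [quasiIsoAt_iff_exactAt']
      · rw [HomologicalComplex.exactAt_iff' _ (n + 2) (n + 1) n (by simp) (by simp)]
        refine ShortComplex.exact_of_iso ?_ (exact_succ hR N₀ h₀ n)
        refine ShortComplex.isoMk (Iso.refl _) (Iso.refl _) (Iso.refl _) ?_ ?_
        · simp only [Iso.refl_hom, Category.id_comp, Category.comp_id]
          exact freeComplex_d hR N₀ h₀ (n + 1)
        · simp only [Iso.refl_hom, Category.id_comp, Category.comp_id]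
          exact freeComplex_d hR N₀ h₀ n
      · apply ChainComplex.exactAt_succ_single_obj⟩

end Resolution


section ExtMem

open Opposite

variable {T : Set (ModuleCat.{u} R)}

theorem ext_mem_of_fp (hR : IsCoherentRing R) (hT : IsTorsionTheory R T)
    {M : Type u} [AddCommGroup M] [Module R M] (hM : ModuleCat.of R M ∈ T)
    (N₀ : ModuleCat.{u} R) (h₀ : Module.FinitePresentation R N₀) (i : ℕ) :
    ((Ext R (ModuleCat.{u} R) i).obj (op N₀)).obj (ModuleCat.of R M) ∈ T := by
  let P := freeRes hR N₀ h₀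
  refine hT.mem_of_iso (P.isoExt i (ModuleCat.of R M)).symm ?_
  let C := P.complex.linearYonedaObj R (ModuleCat.of R M)
  show (C.sc i).homology ∈ T
  refine hT.mem_of_iso ((C.sc i).moduleCatHomologyIso).symm ?_
  have hX2 : (C.sc i).X₂ ∈ T := by
    have := TT.linearMap_mem hT hM (tower hR N₀ h₀ i).2.k
    show ModuleCat.of R (freeX hR N₀ h₀ i ⟶ ModuleCat.of R M) ∈ T
    exact TT.mem_congr hT (ModuleCat.homLinearEquiv (S := R) (M := freeX hR N₀ h₀ i) (N := ModuleCat.of R M)).symm this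
  have hker := hT.submodule_mem hX2 (LinearMap.ker (C.sc i).g.hom)
  exact hT.quotient_mem hker (LinearMap.range (C.sc i).moduleCatToCycles)

end ExtMem

section Main

open Opposite CategoryTheory.Limits

/-- **Theorem.** Let `R` be a coherent commutative ring, `𝔗` a torsion theory, `𝔞` a
finitely generated ideal of `R` and `M ∈ 𝔗`. Then the local cohomology modules
`H^i_𝔞(M) = colim_n Ext^i_R(R/𝔞ⁿ, M)` belong to `𝔗` for all `i ≥ 0`. -/
theorem localCohomology_mem_of_mem_of_isCoherentRing (hR : IsCoherentRing R)
    (T : Set (ModuleCat.{u} R)) (hT : IsTorsionTheory R T)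
    (a : Ideal R) (ha : a.FG) (M : Type u) [AddCommGroup M] [Module R M]
    (hM : ModuleCat.of R M ∈ T) :
    ∀ i : ℕ, (localCohomology a i).obj (ModuleCat.of R M) ∈ T := by
  intro i
  letI := localCohomology.hasColimitDiagram.{u, 0} (localCohomology.idealPowersDiagram a) i
  let F := localCohomology.diagram (localCohomology.idealPowersDiagram a) i
  let G := F ⋙ (evaluation _ _).obj (ModuleCat.of R M)
  have e : (localCohomology a i).obj (ModuleCat.of R M) ≅ colimit G :=
    colimitObjIsoColimitCompEvaluation F (ModuleCat.of R M)
  refine hT.mem_of_iso e.symm ?_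
  have hstage : ∀ j : (ℕᵒᵖ)ᵒᵖ, G.obj j ∈ T := fun j =>
    ext_mem_of_fp hR hT hM (ModuleCat.of R (R ⧸ a ^ (unop (unop j)))) (quot_fp ha _) i
  let S : ULift.{u} ℕ → Submodule R ↥(colimit G) :=
    fun n => LinearMap.range (show ↥(G.obj (op (op n.down))) →ₗ[R] ↥(colimit G) from
      (colimit.ι G (op (op n.down))).hom)
  have hmono : ∀ m n : ℕ, m ≤ n → S ⟨m⟩ ≤ S ⟨n⟩ := by
    intro m n h
    have hw := colimit.w G ((homOfLE h).op.op : op (op m) ⟶ op (op n))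
    intro x hx
    obtain ⟨y, hy⟩ := hx
    exact ⟨(G.map ((homOfLE h).op.op)).hom y, by rw [← hy, ← hw]; rfl⟩
  have hdir : Directed (· ≤ ·) S := by
    intro m n
    exact ⟨⟨max m.down n.down⟩, hmono _ _ (le_max_left _ _), hmono _ _ (le_max_right _ _)⟩
  have hSel : ∀ n : ULift.{u} ℕ, ModuleCat.of R (S n) ∈ T := fun n =>
    TT.range_mem hT (hstage (op (op n.down))) _
  have htop : iSup S = ⊤ := by
    set W := iSup S with hW
    have hle : ∀ (j : (ℕᵒᵖ)ᵒᵖ) (y : ↥(G.obj j)),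
        (show ↥(G.obj j) →ₗ[R] ↥(colimit G) from (colimit.ι G j).hom) y ∈ W := by
      intro j y
      refine le_iSup S ⟨unop (unop j)⟩ ?_
      exact ⟨y, rfl⟩
    let c : ∀ j : (ℕᵒᵖ)ᵒᵖ, G.obj j ⟶ ModuleCat.of R ↥W := fun j =>
      ModuleCat.ofHom (LinearMap.codRestrict W
        (show ↥(G.obj j) →ₗ[R] ↥(colimit G) from (colimit.ι G j).hom) (hle j))
    have hnat : ∀ {j j' : (ℕᵒᵖ)ᵒᵖ} (f : j ⟶ j'), G.map f ≫ c j' = c j := by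
      intro j j' f
      apply ModuleCat.hom_ext
      apply LinearMap.ext
      intro y
      apply Subtype.ext
      show (colimit.ι G j').hom ((G.map f).hom y) = (colimit.ι G j).hom y
      exact congrArg (fun φ => ModuleCat.Hom.hom φ y) (colimit.w G f)
    let cone : Limits.Cocone G :=
      { pt := ModuleCat.of R ↥W
        ι := { app := c
               naturality := fun j j' f => by
                 simp only [Functor.const_obj_map, Category.comp_id]
                 exact hnat f } }
    have hcomp : colimit.desc G cone ≫ (ModuleCat.ofHom W.subtype) = 𝟙 (colimit G) := by
      apply colimit.hom_ext
      intro j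
      rw [colimit.ι_desc_assoc, Category.comp_id]
      apply ModuleCat.hom_ext
      apply LinearMap.ext
      intro y
      rfl
    rw [eq_top_iff]
    rintro x -
    have hx : (W.subtype) ((colimit.desc G cone).hom x) = x :=
      congrArg (fun φ => ModuleCat.Hom.hom φ x) hcomp
    rw [← hx]
    exact ((colimit.desc G cone).hom x).2
  exact hT.directed_mem S hdir hSel htop

end Main
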